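/- The standard Gumbel measure μ on ℝ, defined as the measure with density x ↦ exp(−x − exp(−x)) with respect to Lebesgue measure, is a probability measure, and its mean equals the Euler–Mascheroni constant: ∫ x dμ(x) = γ. -/

import Mathlib

open MeasureTheory Set

open scoped Real

private lemma neg_log_image : (fun t : ℝ => -Real.log t) '' Set.Ioi 0 = Set.univ := by
  ext x
  simp only [Set.mem_image, Set.mem_univ, iff_true]
  exact ⟨Real.exp (-x), Real.exp_pos _, by rw [Real.log_exp, neg_neg]⟩

private lemma neg_log_deriv : ∀ t ∈ Set.Ioi (0:ℝ),
    HasDerivWithinAt (fun t : ℝ => -Real.log t) (-(t⁻¹)) (Set.Ioi 0) t := fun t ht =>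
  ((Real.hasDerivAt_log (ne_of_gt ht)).neg).hasDerivWithinAt

private lemma neg_log_inj : Set.InjOn (fun t : ℝ => -Real.log t) (Set.Ioi 0) :=
  fun a ha b hb h => Real.log_injOn_pos ha hb (by linarith [neg_injective h])

/-- Change of variables `t = exp (-x)` for Gumbel integrals. -/
private lemma gumbel_cov (g : ℝ → ℝ) :
    (∫ x : ℝ, g x * Real.exp (-x - Real.exp (-x))) =
      ∫ t in Set.Ioi (0:ℝ), g (-Real.log t) * Real.exp (-t) := by
  have h := MeasureTheory.integral_image_eq_integral_abs_deriv_smul measurableSet_Ioi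
    neg_log_deriv neg_log_inj (fun x => g x * Real.exp (-x - Real.exp (-x)))
  rw [neg_log_image] at h
  rw [← setIntegral_univ, h]
  refine setIntegral_congr_fun measurableSet_Ioi fun t ht => ?_
  have ht0 : (0:ℝ) < t := ht
  have hlog : Real.exp (-(-Real.log t)) = t := by rw [neg_neg, Real.exp_log ht0]
  rw [smul_eq_mul, abs_neg, abs_inv, abs_of_pos ht0]
  rw [show -(-Real.log t) - Real.exp (-(-Real.log t)) = Real.log t + (-t) by rw [hlog]; ring,
    Real.exp_add, Real.exp_log ht0]
  field_simp

private lemma gumbel_cov_integrable (g : ℝ → ℝ) :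
    MeasureTheory.Integrable (fun x : ℝ => g x * Real.exp (-x - Real.exp (-x))) ↔
      MeasureTheory.IntegrableOn (fun t : ℝ => g (-Real.log t) * Real.exp (-t))
        (Set.Ioi (0:ℝ)) := by
  have h := MeasureTheory.integrableOn_image_iff_integrableOn_abs_deriv_smul measurableSet_Ioi
    neg_log_deriv neg_log_inj (fun x => g x * Real.exp (-x - Real.exp (-x)))
  rw [neg_log_image, ← integrableOn_univ] at *
  rw [h]
  refine integrableOn_congr_fun (fun t ht => ?_) measurableSet_Ioi
  have ht0 : (0:ℝ) < t := ht
  have hlog : Real.exp (-(-Real.log t)) = t := by rw [neg_neg, Real.exp_log ht0]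
  rw [smul_eq_mul, abs_neg, abs_inv, abs_of_pos ht0]
  rw [show -(-Real.log t) - Real.exp (-(-Real.log t)) = Real.log t + (-t) by rw [hlog]; ring,
    Real.exp_add, Real.exp_log ht0]
  field_simp

/-- The key integral: `∫ t in Ioi 0, log t * exp (-t) = -γ`. -/
private lemma integral_log_mul_exp_neg :
    (∫ t in Set.Ioi (0:ℝ), Real.log t * Real.exp (-t)) = -Real.eulerMascheroniConstant := by
  have h1 := Complex.hasDerivAt_GammaIntegral (s := 1) (by norm_num)
  have h2 : HasDerivAt Complex.Gamma (-(Real.eulerMascheroniConstant : ℂ)) 1 := by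
    simpa using Complex.hasDerivAt_Gamma_one
  have heq : Complex.Gamma =ᶠ[nhds (1:ℂ)] Complex.GammaIntegral := by
    have hopen : IsOpen {s : ℂ | 0 < s.re} := isOpen_lt continuous_const Complex.continuous_re
    filter_upwards [hopen.mem_nhds (by norm_num : (0:ℝ) < (1:ℂ).re)] with s hs
    exact Complex.Gamma_eq_integral hs
  have h2' : HasDerivAt Complex.GammaIntegral (-(Real.eulerMascheroniConstant : ℂ)) 1 :=
    h2.congr_of_eventuallyEq heq.symm
  have hval := h2'.unique h1
  have hsimp : (∫ t : ℝ in Set.Ioi 0, (t:ℂ) ^ ((1:ℂ) - 1) * (Real.log t * Real.exp (-t))) =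
      ((∫ t in Set.Ioi (0:ℝ), Real.log t * Real.exp (-t) : ℝ) : ℂ) := by
    calc (∫ t : ℝ in Set.Ioi 0, (t:ℂ) ^ ((1:ℂ) - 1) * (Real.log t * Real.exp (-t)))
        = ∫ t in Set.Ioi (0:ℝ), ((Real.log t * Real.exp (-t) : ℝ) : ℂ) :=
          setIntegral_congr_fun measurableSet_Ioi fun t _ => by
            push_cast; rw [sub_self, Complex.cpow_zero, one_mul]
      _ = _ := integral_ofReal
  rw [hsimp] at hval
  exact_mod_cast hval.symm

private lemma gumbel_density_integrable :
    MeasureTheory.Integrable (fun x : ℝ => Real.exp (-x - Real.exp (-x))) := by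
  have := (gumbel_cov_integrable (fun _ => 1)).mpr ?_
  · simpa using this
  · simp only [one_mul]
    simpa using exp_neg_integrableOn_Ioi 0 (one_pos)

private lemma gumbel_mass : (∫ x : ℝ, Real.exp (-x - Real.exp (-x))) = 1 := by
  have h := gumbel_cov (fun _ => 1)
  simp only [one_mul] at h
  rw [h, integral_exp_neg_Ioi_zero]

private lemma gumbel_mean_integral :
    (∫ x : ℝ, x * Real.exp (-x - Real.exp (-x))) = Real.eulerMascheroniConstant := by
  have h := gumbel_cov id
  simp only [id] at h
  rw [h]
  have : ∀ t : ℝ, -Real.log t * Real.exp (-t) = -(Real.log t * Real.exp (-t)) := fun t => by ring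
  simp_rw [this, integral_neg, integral_log_mul_exp_neg, neg_neg]

/-- The standard Gumbel (Type-I extreme value) measure on ℝ: the measure with
density `x ↦ exp (-x - exp (-x))` with respect to Lebesgue measure. -/
noncomputable def gumbelMeasure : Measure ℝ :=
  MeasureTheory.volume.withDensity
    (fun x => ENNReal.ofReal (Real.exp (-x - Real.exp (-x))))

theorem gumbel_isProbability_and_mean_eq_eulerMascheroni :
    IsProbabilityMeasure gumbelMeasure ∧
      (∫ x, x ∂gumbelMeasure) = Real.eulerMascheroniConstant := by
  have hmeas : Measurable fun x : ℝ => Real.exp (-x - Real.exp (-x)) := by fun_prop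
  constructor
  · constructor
    rw [gumbelMeasure, withDensity_apply _ MeasurableSet.univ,
      setLIntegral_univ,
      ← ofReal_integral_eq_lintegral_ofReal gumbel_density_integrable
        (Filter.Eventually.of_forall fun x => (Real.exp_pos _).le),
      gumbel_mass, ENNReal.ofReal_one]
  · have hmeas' : Measurable fun x : ℝ => Real.toNNReal (Real.exp (-x - Real.exp (-x))) :=
      hmeas.real_toNNReal
    have key : gumbelMeasure = MeasureTheory.volume.withDensity
        (fun x => ((Real.toNNReal (Real.exp (-x - Real.exp (-x))) : NNReal) : ENNReal)) := rfl
    rw [key, integral_withDensity_eq_integral_smul hmeas']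
    have : ∀ x : ℝ, (Real.toNNReal (Real.exp (-x - Real.exp (-x)))) • x
        = x * Real.exp (-x - Real.exp (-x)) := fun x => by
      rw [NNReal.smul_def, smul_eq_mul, Real.coe_toNNReal _ (Real.exp_pos _).le, mul_comm]
    simp_rw [this]
    exact gumbel_mean_integral
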